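/- A ring R (associative with identity) is uniquely D-nil-clean if and only if for every zero-divisor a ∈ R there exists a central idempotent e ∈ R such that a - e is nilpotent. -/

import Mathlib

universe u v

/-- An element `e` is a very idempotent if `e` or `-e` is an idempotent. -/
def IsVeryIdempotent {R : Type u} [Ring R] (e : R) : Prop :=
  IsIdempotentElem e ∨ IsIdempotentElem (-e)

/-- `a` is uniquely weakly nil-clean: it is a sum of a nilpotent and a very idempotent,
and for any two such representations `a = w₁ + e₁ = w₂ + e₂` one has `e₁ ^ 2 = e₂ ^ 2`. -/
def IsUniquelyWeaklyNilClean {R : Type u} [Ring R] (a : R) : Prop :=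
  (∃ w e : R, IsNilpotent w ∧ IsVeryIdempotent e ∧ a = w + e) ∧
  ∀ w₁ e₁ w₂ e₂ : R, IsNilpotent w₁ → IsVeryIdempotent e₁ → IsNilpotent w₂ →
    IsVeryIdempotent e₂ → a = w₁ + e₁ → a = w₂ + e₂ → e₁ ^ 2 = e₂ ^ 2

/-- A ring is uniquely weakly nil-clean if every element is. -/
def UniquelyWeaklyNilCleanRing (R : Type u) [Ring R] : Prop :=
  ∀ a : R, IsUniquelyWeaklyNilClean a

/-- `a` is uniquely nil-clean: it is a sum of a nilpotent and an idempotent,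
and for any two such representations `a = w₁ + e₁ = w₂ + e₂` one has `e₁ = e₂`. -/
def IsUniquelyNilClean {R : Type u} [Ring R] (a : R) : Prop :=
  (∃ w e : R, IsNilpotent w ∧ IsIdempotentElem e ∧ a = w + e) ∧
  ∀ w₁ e₁ w₂ e₂ : R, IsNilpotent w₁ → IsIdempotentElem e₁ → IsNilpotent w₂ →
    IsIdempotentElem e₂ → a = w₁ + e₁ → a = w₂ + e₂ → e₁ = e₂

/-- A ring is uniquely nil-clean if every element is. -/
def UniquelyNilCleanRing (R : Type u) [Ring R] : Prop :=
  ∀ a : R, IsUniquelyNilClean a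

/-- `a` is a zero-divisor: there are nonzero `b, c` with `a * b = 0` and `c * a = 0`. -/
def IsZeroDivisorPair {R : Type u} [Ring R] (a : R) : Prop :=
  ∃ b c : R, b ≠ 0 ∧ c ≠ 0 ∧ a * b = 0 ∧ c * a = 0

/-- A ring is abelian if every idempotent is central. -/
def AbelianRing (R : Type u) [Ring R] : Prop :=
  ∀ e : R, IsIdempotentElem e → ∀ x : R, e * x = x * e

/-- A ring is periodic if every element satisfies `a ^ m = a ^ n` for distinct positive `m, n`. -/
def PeriodicRing (R : Type u) [Ring R] : Prop :=
  ∀ a : R, ∃ m n : ℕ, 0 < m ∧ 0 < n ∧ m ≠ n ∧ a ^ m = a ^ n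

/-- A Boolean ring: every element is idempotent. -/
def IsBooleanRing (R : Type u) [Ring R] : Prop :=
  ∀ a : R, IsIdempotentElem a

/-- `R / J(R)` is isomorphic to `S`, expressed via a surjective ring homomorphism
whose kernel is exactly the Jacobson radical of `R`. -/
def QuotJacobsonIsoTo (R : Type u) [Ring R] (S : Type v) [Ring S] : Prop :=
  ∃ f : R →+* S, Function.Surjective f ∧
    ∀ a : R, f a = 0 ↔ a ∈ Ideal.jacobson (⊥ : Ideal R)

/-- Commuting idempotents whose difference is nilpotent are equal. -/
lemma aux15_idem_eq {R : Type u} [Ring R] {p f : R} (hp : IsIdempotentElem p)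
    (hf : IsIdempotentElem f) (hc : p * f = f * p) (hn : IsNilpotent (p - f)) : p = f := by
  have hpf : IsIdempotentElem (p * f) := by
    unfold IsIdempotentElem at *
    calc p * f * (p * f) = p * (f * p) * f := by noncomm_ring
    _ = p * (p * f) * f := by rw [hc]
    _ = (p * p) * (f * f) := by noncomm_ring
    _ = p * f := by rw [hp, hf]
  have h1 : p - p * f = p * (p - f) := by rw [mul_sub, hp]
  have hcomm1 : Commute p (p - f) := by
    unfold Commute SemiconjBy
    rw [mul_sub, sub_mul, hp, hc]
  have g1 : IsIdempotentElem (p - p * f) := by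
    unfold IsIdempotentElem at *
    calc (p - p * f) * (p - p * f)
        = p * p - p * (p * f) - (p * f) * p + (p * f) * (p * f) := by noncomm_ring
    _ = p * p - (p * p) * f - p * (f * p) + (p * f) * (p * f) := by noncomm_ring
    _ = p - p * f - p * (p * f) + p * f := by rw [hp, hpf, hc]
    _ = p - p * f - (p * p) * f + p * f := by noncomm_ring
    _ = p - p * f := by rw [hp]; abel
  have n1 : IsNilpotent (p - p * f) := by
    rw [h1]; exact hcomm1.isNilpotent_mul_left hn
  have e1 : p - p * f = 0 := g1.eq_zero_of_isNilpotent n1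
  have h2 : f - p * f = -(f * (p - f)) := by rw [mul_sub, hf, ← hc]; abel
  have hcomm2 : Commute f (p - f) := by
    unfold Commute SemiconjBy
    rw [mul_sub, sub_mul, hf, hc]
  have g2 : IsIdempotentElem (f - p * f) := by
    unfold IsIdempotentElem at *
    calc (f - p * f) * (f - p * f)
        = f * f - f * (p * f) - (p * f) * f + (p * f) * (p * f) := by noncomm_ring
    _ = f * f - (f * p) * f - p * (f * f) + (p * f) * (p * f) := by noncomm_ring
    _ = f - (p * f) * f - p * f + p * f := by rw [hf, hpf, hc]
    _ = f - p * (f * f) - p * f + p * f := by noncomm_ring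
    _ = f - p * f := by rw [hf]; abel
  have n2 : IsNilpotent (f - p * f) := by
    rw [h2]; exact (hcomm2.isNilpotent_mul_left hn).neg
  have e2 : f - p * f = 0 := g2.eq_zero_of_isNilpotent n2
  exact sub_left_inj.mp (e1.trans e2.symm)

/-- An idempotent different from 1 is a zero-divisor pair element. -/
lemma aux15_zd {R : Type u} [Ring R] {p : R} (hp : IsIdempotentElem p) (h1 : p ≠ 1) :
    IsZeroDivisorPair p := by
  refine ⟨1 - p, 1 - p, ?_, ?_, ?_, ?_⟩
  · intro h; exact h1 (sub_eq_zero.mp h).symm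
  · intro h; exact h1 (sub_eq_zero.mp h).symm
  · rw [mul_sub, mul_one, hp, sub_self]
  · rw [sub_mul, one_mul, hp, sub_self]

/-- Under the LHS hypothesis, a square-zero `t` with `e*t + t*e = t` for idempotent `e` is zero. -/
lemma aux15_tzero {R : Type u} [Ring R]
    (H : ∀ a : R, IsZeroDivisorPair a → IsUniquelyNilClean a)
    {e t : R} (he : IsIdempotentElem e) (ht : t * t = 0) (hs : e * t + t * e = t) : t = 0 := by
  have hid : IsIdempotentElem (e + t) := by
    unfold IsIdempotentElem at *
    calc (e + t) * (e + t) = e * e + (e * t + t * e) + t * t := by noncomm_ring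
    _ = e + t + 0 := by rw [he, hs, ht]
    _ = e + t := by rw [add_zero]
  by_cases h1 : e + t = 1
  · have h2 : t = 1 - e := eq_sub_of_add_eq' h1
    have h3 : t * t = t := by
      rw [h2, sub_mul, one_mul, mul_sub, mul_one, he]; abel
    rw [← h3, ht]
  · have hzd := aux15_zd hid h1
    have hU := H (e + t) hzd
    have h4 := hU.2 t e 0 (e + t) ⟨2, by rw [sq, ht]⟩ he (IsNilpotent.zero) hid
      (add_comm e t) (zero_add _).symm
    exact (left_eq_add.mp h4)

/-- Under the RHS hypothesis, a square-zero `t` with `e*t + t*e = t` for idempotent `e` is zero. -/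
lemma aux15_abelian {R : Type u} [Ring R]
    (H : ∀ a : R, IsZeroDivisorPair a →
      ∃ e : R, IsIdempotentElem e ∧ (∀ x : R, e * x = x * e) ∧ IsNilpotent (a - e))
    {e t : R} (he : IsIdempotentElem e) (ht : t * t = 0) (hs : e * t + t * e = t) : t = 0 := by
  have hid : IsIdempotentElem (e + t) := by
    unfold IsIdempotentElem at *
    calc (e + t) * (e + t) = e * e + (e * t + t * e) + t * t := by noncomm_ring
    _ = e + t + 0 := by rw [he, hs, ht]
    _ = e + t := by rw [add_zero]
  by_cases h1 : e + t = 1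
  · have h2 : t = 1 - e := eq_sub_of_add_eq' h1
    have h3 : t * t = t := by
      rw [h2, sub_mul, one_mul, mul_sub, mul_one, he]; abel
    rw [← h3, ht]
  · obtain ⟨f, hf, hfc, hn⟩ := H (e + t) (aux15_zd hid h1)
    have hpf : e + t = f := aux15_idem_eq hid hf ((hfc (e + t)).symm) hn
    have h3 : (e + t) * e = e * (e + t) := by rw [hpf]; exact hfc e
    have h4 : e + t * e = e + e * t := by
      calc e + t * e = (e + t) * e := by rw [add_mul, he]
      _ = e * (e + t) := h3
      _ = e + e * t := by rw [mul_add, he]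
    have h5 : t * e = e * t := add_left_cancel h4
    have hs' : e * t + e * t = t := by rw [h5] at hs; exact hs
    have h6 : e * t = t := by
      calc e * t = e * (e * t + e * t) := by rw [hs']
      _ = (e * e) * t + (e * e) * t := by noncomm_ring
      _ = e * t + e * t := by rw [he]
      _ = t := hs'
    rw [h6] at hs'
    exact add_eq_right.mp hs'

/-- Centrality from the cancellation property for square-zero pieces. -/
lemma aux15_central {R : Type u} [Ring R] {e : R} (he : IsIdempotentElem e)
    (K : ∀ t : R, t * t = 0 → e * t + t * e = t → t = 0) : ∀ x : R, e * x = x * e := by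
  intro x
  have hee : e * e = e := he
  have hee2 : ∀ y : R, e * (e * y) = e * y := fun y => by rw [← mul_assoc, hee]
  have ht : (e * x - e * x * e) = 0 := by
    apply K
    · simp only [sub_mul, mul_sub, mul_assoc, hee, hee2]
      abel
    · simp only [add_mul, sub_mul, mul_sub, mul_add, mul_assoc, hee, hee2]
      abel
  have hs : (x * e - e * x * e) = 0 := by
    apply K
    · simp only [sub_mul, mul_sub, mul_assoc, hee, hee2]
      abel
    · simp only [add_mul, sub_mul, mul_sub, mul_add, mul_assoc, hee, hee2]
      abel
  have h1 : e * x = e * x * e := by rwa [sub_eq_zero] at ht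
  have h2 : x * e = e * x * e := by rwa [sub_eq_zero] at hs
  rw [h1, h2]

theorem stmt15 (R : Type u) [Ring R] :
    (∀ a : R, IsZeroDivisorPair a → IsUniquelyNilClean a) ↔
      (∀ a : R, IsZeroDivisorPair a →
        ∃ e : R, IsIdempotentElem e ∧ (∀ x : R, e * x = x * e) ∧ IsNilpotent (a - e)) := by
  constructor
  · intro H a ha
    obtain ⟨⟨w, e, hw, he, hae⟩, _⟩ := H a ha
    refine ⟨e, he, aux15_central he (fun t h1 h2 => aux15_tzero H he h1 h2), ?_⟩
    rw [hae, add_sub_cancel_right]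
    exact hw
  · intro H a ha
    constructor
    · obtain ⟨e, he, _, hn⟩ := H a ha
      exact ⟨a - e, e, hn, he, by abel⟩
    · intro w₁ e₁ w₂ e₂ hw₁ he₁ hw₂ he₂ h₁ h₂
      have hc₁ : ∀ x : R, e₁ * x = x * e₁ :=
        aux15_central he₁ (fun t u1 u2 => aux15_abelian H he₁ u1 u2)
      have hc₂ : ∀ x : R, e₂ * x = x * e₂ :=
        aux15_central he₂ (fun t u1 u2 => aux15_abelian H he₂ u1 u2)
      have hsum : w₁ + e₁ = w₂ + e₂ := h₁.symm.trans h₂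
      have hd : e₁ - e₂ = w₂ - w₁ := by
        rw [sub_eq_sub_iff_add_eq_add, add_comm e₁ w₁]
        exact hsum
      have hdc : ∀ x : R, (e₁ - e₂) * x = x * (e₁ - e₂) := by
        intro x; rw [sub_mul, mul_sub, hc₁, hc₂]
      have hcomm : Commute w₂ w₁ := by
        unfold Commute SemiconjBy
        have hw2 : w₂ = w₁ + (e₁ - e₂) := by rw [hd]; abel
        rw [hw2, add_mul, mul_add, hdc w₁]
      have hn : IsNilpotent (e₁ - e₂) := by
        rw [hd]
        exact Commute.isNilpotent_sub hcomm hw₂ hw₁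
      exact aux15_idem_eq he₁ he₂ (hc₁ e₂) hn
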